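/- Let M be a length-one ℤ[t]-module of exponent 2ⁿ, let σ be an involution of ℤ[t], and let b : M × M → ℚ[t]/ℤ[t] be a nonsingular σ-sesquilinear linking form on M. Then for every submodule N of M one has N̄ = N^⊥⊥, where N̄ is the closure of N. -/

import Mathlib

noncomputable instance : Algebra (Polynomial ℤ) (Polynomial ℚ) :=
  (Polynomial.mapRingHom (Int.castRingHom ℚ)).toAlgebra

/-- The `ℤ[t]`-module `ℚ[t]/ℤ[t]`. -/
noncomputable abbrev QtZt : Type :=
  Polynomial ℚ ⧸ LinearMap.range (Algebra.linearMap (Polynomial ℤ) (Polynomial ℚ))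

/-- An `R`-module `M` has *length one*. -/
def IsLengthOne (R M : Type*) [CommRing R] [AddCommGroup M] [Module R M] : Prop :=
  ∃ (k l : ℕ) (f : (Fin k → R) →ₗ[R] (Fin l → R)) (g : (Fin l → R) →ₗ[R] M),
    Function.Injective f ∧ Function.Surjective g ∧ LinearMap.range f = LinearMap.ker g

/-- A nonsingular `σ`-sesquilinear linking form on a `ℤ[t]`-module `M`, with values in
`ℚ[t]/ℤ[t]`.  Here `σ` is an involution of `ℤ[t]` and `τ` is the induced additive
involution `σ̄` of `ℚ[t]/ℤ[t]`.  Nonsingularity is stated as bijectivity of the adjoint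
`x ↦ (y ↦ b x y) : M → M^∧`. -/
structure LinkingForm (σ : Polynomial ℤ ≃+* Polynomial ℤ) (τ : QtZt →+ QtZt)
    (M : Type) [AddCommGroup M] [Module (Polynomial ℤ) M] where
  b : M → M → QtZt
  add_left : ∀ x x' y, b (x + x') y = b x y + b x' y
  add_right : ∀ x y y', b x (y + y') = b x y + b x y'
  smul_right : ∀ (p : Polynomial ℤ) (x y : M), b x (p • y) = p • b x y
  smul_left : ∀ (p : Polynomial ℤ) (x y : M), b (p • x) y = σ p • b x y
  symm : ∀ x y, b x y = τ (b y x)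
  nondegen : ∀ x, (∀ y, b x y = 0) → x = 0
  adj_surj : ∀ φ : M →ₗ[Polynomial ℤ] QtZt, ∃ x, ∀ y, b x y = φ y

namespace LinkingForm

variable {σ : Polynomial ℤ ≃+* Polynomial ℤ} {τ : QtZt →+ QtZt}
  {M : Type} [AddCommGroup M] [Module (Polynomial ℤ) M]

lemma b_zero_left (L : LinkingForm σ τ M) (y : M) : L.b 0 y = 0 := by
  have h := L.add_left 0 0 y
  rw [add_zero] at h
  exact (left_eq_add.mp h)

/-- The orthogonal complement `X^⊥ = {y ∈ M : b(y,x) = 0 for all x ∈ X}`. -/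
def perp (L : LinkingForm σ τ M) (X : Submodule (Polynomial ℤ) M) :
    Submodule (Polynomial ℤ) M where
  carrier := {y | ∀ x ∈ X, L.b y x = 0}
  zero_mem' := fun x _ => L.b_zero_left x
  add_mem' := by
    intro a b ha hb x hx
    rw [L.add_left, ha x hx, hb x hx, add_zero]
  smul_mem' := by
    intro r a ha x hx
    rw [L.smul_left, ha x hx, smul_zero]

end LinkingForm

lemma prime_two_polyInt : Prime (2 : Polynomial ℤ) := by
  rw [show (2 : Polynomial ℤ) = Polynomial.C 2 by simp]
  exact Polynomial.prime_C_iff.mpr Int.prime_two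

lemma span_two_isPrime : (Ideal.span {(2 : Polynomial ℤ)}).IsPrime :=
  (Ideal.span_singleton_prime (by norm_num)).mpr prime_two_polyInt

/-- The closure `N̄ = {x ∈ M : p • x ∈ N for some p ∈ ℤ[t] with p ∉ 2ℤ[t]}`. -/
def Submodule.closure' {M : Type*} [AddCommGroup M] [Module (Polynomial ℤ) M]
    (N : Submodule (Polynomial ℤ) M) : Submodule (Polynomial ℤ) M where
  carrier := {x | ∃ p : Polynomial ℤ, p ∉ Ideal.span {(2 : Polynomial ℤ)} ∧ p • x ∈ N}
  zero_mem' := by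
    refine ⟨1, fun h => prime_two_polyInt.not_unit
      (isUnit_of_dvd_one (Ideal.mem_span_singleton.mp h)), by simp⟩
  add_mem' := by
    rintro a b ⟨p, hp, hpa⟩ ⟨q, hq, hqb⟩
    refine ⟨p * q, fun h => ?_, ?_⟩
    · rcases span_two_isPrime.mem_or_mem h with h' | h'
      · exact hp h'
      · exact hq h'
    · rw [smul_add]
      exact N.add_mem
        (by rw [mul_comm, mul_smul]; exact N.smul_mem q hpa)
        (by rw [mul_smul]; exact N.smul_mem p hqb)
  smul_mem' := by
    rintro r a ⟨p, hp, hpa⟩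
    exact ⟨p, hp, by rw [smul_comm]; exact N.smul_mem r hpa⟩

instance : (Ideal.span {(2 : Polynomial ℤ)}).IsPrime := span_two_isPrime

section Aux

local notation "R" => Polynomial ℤ
local notation "QQ" => Polynomial ℚ

lemma algQ_injective : Function.Injective (algebraMap R QQ) :=
  Polynomial.map_injective _ Int.cast_injective

lemma aux_dvd_of_odd_mul {p a : R} (n : ℕ) (hp : ¬ (2:R) ∣ p) (h : (2:R)^n ∣ p * a) :
    (2:R)^n ∣ a :=
  prime_two_polyInt.pow_dvd_of_dvd_mul_left _ hp h

lemma qtzt_mk_eq_zero (x : QQ) :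
    (Submodule.Quotient.mk x : QtZt) = 0 ↔ ∃ a : R, algebraMap R QQ a = x := by
  rw [Submodule.Quotient.mk_eq_zero]
  exact LinearMap.mem_range

lemma qtzt_smul_mk (p : R) (x : QQ) :
    p • (Submodule.Quotient.mk x : QtZt) = Submodule.Quotient.mk (algebraMap R QQ p * x) := by
  rw [← Submodule.Quotient.mk_smul]
  rw [Algebra.smul_def]

/-- torsion lemma: an element of `ℚ[t]/ℤ[t]` killed by `2^n` and by an odd `p` is zero. -/
lemma qtzt_eq_zero {c : QtZt} {p : R} (n : ℕ) (hp : ¬ (2:R) ∣ p)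
    (h1 : ((2:R)^n) • c = 0) (h2 : p • c = 0) : c = 0 := by
  obtain ⟨q, rfl⟩ := Submodule.Quotient.mk_surjective _ c
  rw [qtzt_smul_mk, qtzt_mk_eq_zero] at h1 h2
  obtain ⟨a, ha⟩ := h1
  obtain ⟨b, hb⟩ := h2
  have key : p * a = 2^n * b := by
    apply algQ_injective
    rw [map_mul, map_mul, ha, hb]; ring
  have h2n : (2:R)^n ∣ a := aux_dvd_of_odd_mul n hp ⟨b, key⟩
  obtain ⟨a', rfl⟩ := h2n
  rw [qtzt_mk_eq_zero]
  refine ⟨a', ?_⟩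
  have h20 : algebraMap R QQ ((2:R)^n) ≠ 0 := by
    simp only [ne_eq, map_eq_zero_iff _ algQ_injective]
    exact pow_ne_zero _ two_ne_zero
  have := ha
  rw [map_mul] at this
  exact mul_left_cancel₀ h20 this

end Aux

noncomputable section Loc

local notation "R" => Polynomial ℤ

abbrev SS : Submonoid (Polynomial ℤ) := (Ideal.span {(2 : Polynomial ℤ)}).primeCompl

abbrev DD : Type := Localization.AtPrime (Ideal.span {(2 : Polynomial ℤ)})

lemma mem_SS {s : R} : s ∈ SS ↔ ¬ (2:R) ∣ s := by
  change s ∉ Ideal.span _ ↔ _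
  rw [Ideal.mem_span_singleton]

lemma hSle : SS ≤ nonZeroDivisors R := Ideal.primeCompl_le_nonZeroDivisors _

lemma algD_inj : Function.Injective (algebraMap R DD) := IsLocalization.injective DD hSle

example : IsDomain DD := inferInstance

lemma two_D : (2 : DD) = algebraMap R DD 2 := by
  rw [map_ofNat]

lemma algD_unit {s : R} (hs : s ∈ SS) : IsUnit (algebraMap R DD s) :=
  IsLocalization.map_units DD ⟨s, hs⟩

lemma D_surj (d : DD) : ∃ (r s : R), s ∈ SS ∧ d * algebraMap R DD s = algebraMap R DD r := by
  obtain ⟨⟨r, s⟩, h⟩ := IsLocalization.surj SS d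
  exact ⟨r, s, s.2, h⟩

lemma factor_R {r : R} (hr : r ≠ 0) : ∃ (k : ℕ) (r' : R), ¬ (2:R) ∣ r' ∧ r = 2^k * r' := by
  obtain ⟨k, r', h1, h2⟩ := WfDvdMonoid.max_power_factor hr prime_two_polyInt.irreducible
  exact ⟨k, r', h1, h2⟩

lemma D_two_ne_zero : (2 : DD) ≠ 0 := by
  rw [two_D, ne_eq, map_eq_zero_iff _ algD_inj]
  norm_num

lemma D_factor {d : DD} (hd : d ≠ 0) : ∃ (k : ℕ) (u : DD), IsUnit u ∧ d = 2^k * u := by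
  obtain ⟨r, s, hs, h⟩ := D_surj d
  have hr : r ≠ 0 := by
    rintro rfl
    rw [map_zero] at h
    exact hd (((algD_unit hs).mul_left_eq_zero).mp h)
  obtain ⟨k, r', hr', rfl⟩ := factor_R hr
  obtain ⟨w, hw⟩ := (algD_unit hs).exists_right_inv
  refine ⟨k, algebraMap R DD r' * w, ?_, ?_⟩
  · exact ((algD_unit (mem_SS.mpr hr')).mul (IsUnit.of_mul_eq_one _ ((mul_comm _ _).trans hw)))
  · have : d * (algebraMap R DD s * w) = (2:DD)^k * (algebraMap R DD r' * w) := by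
      rw [← mul_assoc, h, map_mul, two_D, ← map_pow, mul_assoc]
    rwa [hw, mul_one] at this

lemma D_dvd_pull {a : R} {n : ℕ} (h : ∃ d : DD, algebraMap R DD a = 2^n * d) : (2:R)^n ∣ a := by
  obtain ⟨d, hd⟩ := h
  obtain ⟨r, s, hs, h⟩ := D_surj d
  have : algebraMap R DD (a * s) = algebraMap R DD (2^n * r) := by
    rw [map_mul, hd, map_mul, mul_assoc, h, two_D, ← map_pow]
  have has : a * s = 2^n * r := algD_inj this
  exact aux_dvd_of_odd_mul n (mem_SS.mp hs) (by rw [mul_comm] at has; exact ⟨r, has⟩)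

instance D_pid : IsPrincipalIdealRing DD := by
  constructor
  intro I
  by_cases hI : I = ⊥
  · exact ⟨0, by rw [hI, Ideal.submodule_span_eq, Set.singleton_zero, Ideal.span_zero]⟩
  obtain ⟨d₀, hd₀I, hd₀⟩ := Submodule.exists_mem_ne_zero_of_ne_bot hI
  set K : Set ℕ := {k | ∃ d ∈ I, ∃ u : DD, IsUnit u ∧ d = 2^k * u} with hK
  have hKne : K.Nonempty := by
    obtain ⟨k, u, hu, h⟩ := D_factor hd₀
    exact ⟨k, d₀, hd₀I, u, hu, h⟩
  set a := sInf K
  obtain ⟨d, hdI, u, hu, hdu⟩ := Nat.sInf_mem hKne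
  refine ⟨(2:DD)^a, ?_⟩
  apply le_antisymm
  · intro z hz
    by_cases hz0 : z = 0
    · simp [hz0]
    obtain ⟨k, w, hw, rfl⟩ := D_factor hz0
    have hk : a ≤ k := Nat.sInf_le ⟨_, hz, w, hw, rfl⟩
    rw [Ideal.submodule_span_eq, Ideal.mem_span_singleton]
    exact ⟨2^(k-a) * w, by rw [← mul_assoc, ← pow_add, Nat.add_sub_cancel' hk]⟩
  · rw [Ideal.submodule_span_eq, Ideal.span_le, Set.singleton_subset_iff]
    have : (2:DD)^a = d * ↑hu.unit⁻¹ := by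
      rw [hdu, mul_assoc, IsUnit.mul_val_inv, mul_one]
    rw [this]
    exact Ideal.mul_mem_right _ _ hdI

end Loc

noncomputable section Sep

local notation "R" => Polynomial ℤ

variable {k n : ℕ}

/-- componentwise localization map -/
def iot (w : Fin k → R) : Fin k → DD := fun i => algebraMap R DD (w i)

lemma iot_add (w w' : Fin k → R) : iot (w + w') = iot w + iot w' := by
  funext i; simp [iot]

lemma iot_smul (r : R) (w : Fin k → R) :
    iot (r • w) = (algebraMap R DD r) • iot w := by
  funext i; simp [iot, Algebra.smul_def]

lemma iot_inj : Function.Injective (iot (k := k)) := by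
  intro w w' h
  funext i
  exact algD_inj (congrFun h i)

set_option maxHeartbeats 1000000 in
/-- The separation lemma: if `W` contains `2^n • (everything)` and no odd multiple of `v₀`
lies in `W`, then there is a functional `u` with `u W ⊆ 2^n R` and `u v₀ ∉ 2^n R`. -/
lemma separation (W : Submodule R (Fin k → R))
    (hW : ∀ z : Fin k → R, ((2:R)^n) • z ∈ W) (v0 : Fin k → R)
    (hv : ∀ s ∈ SS, s • v0 ∉ W) :
    ∃ u : (Fin k → R) →ₗ[R] R, (∀ w ∈ W, (2:R)^n ∣ u w) ∧ ¬ ((2:R)^n ∣ u v0) := by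
  classical
  set WD : Submodule DD (Fin k → DD) := Submodule.span DD (iot '' (W : Set (Fin k → R))) with hWDdef
  have hmemWD : ∀ w ∈ W, iot w ∈ WD := fun w hw =>
    Submodule.subset_span ⟨w, hw, rfl⟩
  -- every element of WD has an odd multiple coming from W
  have hspan : ∀ z ∈ WD, ∃ s ∈ SS, ∃ w ∈ W, (algebraMap R DD s) • z = iot w := by
    intro z hz
    induction hz using Submodule.span_induction with
    | mem z hz =>
        obtain ⟨w, hw, rfl⟩ := hz
        exact ⟨1, one_mem _, w, hw, by rw [map_one, one_smul]⟩
    | zero => exact ⟨1, one_mem _, 0, zero_mem _, by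
        rw [map_one, one_smul]; funext i; simp [iot]⟩
    | add z z' _ _ hz hz' =>
        obtain ⟨s, hs, w, hw, h⟩ := hz
        obtain ⟨s', hs', w', hw', h'⟩ := hz'
        refine ⟨s * s', mul_mem hs hs', s' • w + s • w',
          W.add_mem (W.smul_mem _ hw) (W.smul_mem _ hw'), ?_⟩
        rw [map_mul, smul_add, iot_add, iot_smul, iot_smul, ← h, ← h']
        simp only [smul_add, smul_smul]
        rw [mul_comm ((algebraMap R DD) s) ((algebraMap R DD) s')]
    | smul d z _ hz =>
        obtain ⟨s, hs, w, hw, h⟩ := hz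
        obtain ⟨r, t, ht, hrt⟩ := D_surj d
        refine ⟨t * s, mul_mem ht hs, r • w, W.smul_mem _ hw, ?_⟩
        rw [iot_smul, ← h, ← hrt, map_mul]
        simp only [smul_smul]
        congr 1
        ring
  have hv0 : iot v0 ∉ WD := by
    intro hmem
    obtain ⟨s, hs, w, hw, h⟩ := hspan _ hmem
    rw [← iot_smul] at h
    exact hv s hs (iot_inj h ▸ hw)
  -- 2^n • (anything) ∈ WD
  have hWD2 : ∀ z : Fin k → DD, ((2:DD)^n) • z ∈ WD := by
    intro z
    have hz : ((2:DD)^n) • z = ∑ i : Fin k, z i • iot (((2:R)^n) • (Pi.single i (1:R) : Fin k → R)) := by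
      funext j
      rw [Finset.sum_apply]
      rw [Finset.sum_eq_single j]
      · simp [iot, Pi.single_apply, Algebra.smul_def, two_D, mul_comm]
      · intro i _ hij
        simp [iot, Pi.single_apply, Ne.symm hij]
      · intro h; exact absurd (Finset.mem_univ j) h
    rw [hz]
    exact Submodule.sum_mem _ fun i _ => WD.smul_mem _ (hmemWD _ (hW _))
  -- the quotient module
  set Q := (Fin k → DD) ⧸ WD with hQdef
  have hQfin : Module.Finite DD Q :=
    Module.Finite.of_surjective WD.mkQ (Submodule.mkQ_surjective WD)
  have hQkill : ∀ x : Q, ((2:DD)^n) • x = 0 := by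
    intro x
    obtain ⟨z, rfl⟩ := Submodule.mkQ_surjective WD x
    rw [Submodule.mkQ_apply, ← Submodule.Quotient.mk_smul, Submodule.Quotient.mk_eq_zero]
    exact hWD2 z
  have htor : Module.IsTorsion DD Q := fun x =>
    ⟨⟨(2:DD)^n, mem_nonZeroDivisors_of_ne_zero (pow_ne_zero _ D_two_ne_zero)⟩, hQkill x⟩
  obtain ⟨ι', fι', p, hp, e, ⟨E⟩⟩ := Module.equiv_directSum_of_isTorsion htor
  have hvQ : WD.mkQ (iot v0) ≠ 0 := by
    rw [Submodule.mkQ_apply, ne_eq, Submodule.Quotient.mk_eq_zero]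
    exact hv0
  have hq0 : E (WD.mkQ (iot v0)) ≠ 0 := fun h => hvQ (by
    have := congrArg E.symm h
    rwa [LinearEquiv.symm_apply_apply, map_zero] at this)
  obtain ⟨i₀, hi₀⟩ : ∃ i₀, DirectSum.component DD ι' _ i₀ (E (WD.mkQ (iot v0))) ≠ 0 := by
    by_contra hall
    push_neg at hall
    exact hq0 (DirectSum.ext_component DD fun i => by rw [hall i, map_zero])
  -- the prime power q divides 2^n
  set q : DD := p i₀ ^ e i₀ with hqdef
  obtain ⟨c, hc⟩ : ∃ c : DD, (2:DD)^n = c * q := by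
    have h1 : ((2:DD)^n) • (DirectSum.lof DD ι' (fun i => DD ⧸ (DD ∙ p i ^ e i)) i₀
        (Submodule.Quotient.mk 1)) = 0 := by
      have := hQkill (E.symm (DirectSum.lof DD ι' (fun i => DD ⧸ (DD ∙ p i ^ e i)) i₀
        (Submodule.Quotient.mk 1)))
      have h2 := congrArg E this
      rwa [map_smul, LinearEquiv.apply_symm_apply, map_zero] at h2
    have h3 := congrArg (DirectSum.component DD ι' _ i₀) h1
    rw [map_smul, DirectSum.component.lof_self, map_zero] at h3
    rw [← Submodule.Quotient.mk_smul, Submodule.Quotient.mk_eq_zero,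
      Submodule.mem_span_singleton] at h3
    obtain ⟨a, ha⟩ := h3
    rw [smul_eq_mul, smul_eq_mul, mul_one] at ha
    exact ⟨a, ha.symm⟩
  have hc0 : c ≠ 0 := by
    intro h
    rw [h, zero_mul] at hc
    exact pow_ne_zero n D_two_ne_zero hc
  -- multiplication by c : DD⧸(q) →ₗ DD⧸(2^n)
  set m : (DD ⧸ (DD ∙ q)) →ₗ[DD] (DD ⧸ (DD ∙ (2:DD)^n)) :=
    Submodule.mapQ _ _ (c • (LinearMap.id : DD →ₗ[DD] DD)) (by
      intro x hx
      rw [Submodule.mem_comap]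
      obtain ⟨a, ha⟩ := Submodule.mem_span_singleton.mp hx
      rw [Submodule.mem_span_singleton]
      refine ⟨a, ?_⟩
      simp only [LinearMap.smul_apply, LinearMap.id_apply, smul_eq_mul, ← ha]
      rw [hc]; ring) with hmdef
  have hm : ∀ d : DD, m (Submodule.Quotient.mk d) = Submodule.Quotient.mk (c * d) := by
    intro d
    rw [hmdef, Submodule.mapQ_apply]
    simp [smul_eq_mul]
  have hminj : ∀ d : DD, m (Submodule.Quotient.mk d) = 0 → Submodule.Quotient.mk (p := DD ∙ q) d = 0 := by
    intro d h
    rw [hm, Submodule.Quotient.mk_eq_zero, Submodule.mem_span_singleton] at h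
    obtain ⟨a, ha⟩ := h
    rw [Submodule.Quotient.mk_eq_zero, Submodule.mem_span_singleton]
    refine ⟨a, ?_⟩
    have : c * (a * q) = c * d := by rw [← ha, smul_eq_mul, hc]; ring
    have := mul_left_cancel₀ hc0 this
    rw [smul_eq_mul, this]
  -- the functional over DD
  set u' : (Fin k → DD) →ₗ[DD] (DD ⧸ (DD ∙ (2:DD)^n)) :=
    m ∘ₗ (DirectSum.component DD ι' _ i₀) ∘ₗ E.toLinearMap ∘ₗ WD.mkQ with hu'def
  have hu'W : ∀ z ∈ WD, u' z = 0 := by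
    intro z hz
    rw [hu'def]
    simp only [LinearMap.comp_apply, LinearEquiv.coe_coe]
    rw [Submodule.mkQ_apply, (Submodule.Quotient.mk_eq_zero WD).mpr hz]
    rw [map_zero, map_zero, map_zero]
  have hu'v : u' (iot v0) ≠ 0 := by
    intro h
    apply hi₀
    obtain ⟨d, hd⟩ := Submodule.Quotient.mk_surjective _
      (DirectSum.component DD ι' _ i₀ (E (WD.mkQ (iot v0))))
    rw [hu'def] at h
    simp only [LinearMap.comp_apply, LinearEquiv.coe_coe] at h
    rw [← hd] at h ⊢
    rw [hminj d h]
  -- lift u' to a genuine functional into DD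
  have hexlift : ∀ i : Fin k, ∃ ci : DD,
      Submodule.Quotient.mk ci = u' (Pi.single i 1) :=
    fun i => Submodule.Quotient.mk_surjective _ _
  choose cc hcc using hexlift
  set u'' : (Fin k → DD) →ₗ[DD] DD := ∑ i : Fin k, cc i • LinearMap.proj i with hu''def
  have hu''apply : ∀ z : Fin k → DD, u'' z = ∑ i : Fin k, cc i * z i := by
    intro z
    rw [hu''def]
    simp [LinearMap.sum_apply, smul_eq_mul]
  have hlift : ∀ z : Fin k → DD, Submodule.Quotient.mk (u'' z) = u' z := by
    have : (DD ∙ (2:DD)^n).mkQ.comp u'' = u' := by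
      apply LinearMap.pi_ext
      intro i x
      rw [LinearMap.comp_apply, Submodule.mkQ_apply, hu''apply]
      rw [Finset.sum_eq_single i]
      · have hsx : Pi.single i x = x • (Pi.single i (1:DD) : Fin k → DD) := by
          funext j
          by_cases hij : j = i
          · subst hij; simp
          · simp [Pi.single_apply, Ne.symm, hij]
        rw [hsx, map_smul (u'), ← hcc i]
        have hx1 : (x • (Pi.single i (1:DD) : Fin k → DD)) i = x := by simp
        rw [hx1, ← Submodule.Quotient.mk_smul, smul_eq_mul, mul_comm]
      · intro j _ hij
        simp [Pi.single_apply, Ne.symm hij]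
      · intro h; exact absurd (Finset.mem_univ i) h
    intro z
    have := congrFun (congrArg (fun f => f.toFun) this) z
    simpa using this
  -- clear denominators
  have hsurj : ∀ i : Fin k, ∃ rt : R × R, rt.2 ∈ SS ∧
      cc i * algebraMap R DD rt.2 = algebraMap R DD rt.1 := by
    intro i
    obtain ⟨r, s, hs, h⟩ := D_surj (cc i)
    exact ⟨(r, s), hs, h⟩
  choose rt hrtS hrt using hsurj
  set s : R := ∏ i : Fin k, (rt i).2 with hsdef
  have hsS : s ∈ SS := Submonoid.prod_mem _ fun i _ => hrtS i
  set tt : Fin k → R := fun i => (rt i).1 * ∏ j ∈ Finset.univ.erase i, (rt j).2 with httdef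
  have htt : ∀ i, algebraMap R DD (tt i) = algebraMap R DD s * cc i := by
    intro i
    have hsplit : s = (rt i).2 * ∏ j ∈ Finset.univ.erase i, (rt j).2 :=
      (Finset.mul_prod_erase Finset.univ (fun j => (rt j).2) (Finset.mem_univ i)).symm
    rw [httdef, hsplit]
    simp only [map_mul]
    rw [← hrt i]
    ring
  set u : (Fin k → R) →ₗ[R] R := ∑ i : Fin k, tt i • LinearMap.proj i with hudef
  have huapply : ∀ w : Fin k → R, u w = ∑ i : Fin k, tt i * w i := by
    intro w
    rw [hudef]
    simp [LinearMap.sum_apply, smul_eq_mul]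
  have halg : ∀ w : Fin k → R, algebraMap R DD (u w) = algebraMap R DD s * u'' (iot w) := by
    intro w
    rw [huapply, hu''apply, map_sum, Finset.mul_sum]
    apply Finset.sum_congr rfl
    intro i _
    rw [map_mul, htt i, iot]
    ring
  refine ⟨u, ?_, ?_⟩
  · intro w hw
    apply D_dvd_pull (n := n)
    have h0 : u' (iot w) = 0 := hu'W _ (hmemWD w hw)
    have h1 : Submodule.Quotient.mk (u'' (iot w)) = (0 : DD ⧸ (DD ∙ (2:DD)^n)) := by
      rw [hlift, h0]
    rw [Submodule.Quotient.mk_eq_zero, Submodule.mem_span_singleton] at h1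
    obtain ⟨a, ha⟩ := h1
    refine ⟨algebraMap R DD s * a, ?_⟩
    rw [halg, ← ha, smul_eq_mul]
    ring
  · intro hdvd
    obtain ⟨b, hb⟩ := hdvd
    apply hu'v
    rw [← hlift, Submodule.Quotient.mk_eq_zero, Submodule.mem_span_singleton]
    obtain ⟨w, hw⟩ := (algD_unit hsS).exists_left_inv
    refine ⟨w * algebraMap R DD b, ?_⟩
    have h1 : algebraMap R DD s * u'' (iot v0) = (2:DD)^n * algebraMap R DD b := by
      rw [← halg, hb, map_mul, map_pow, two_D]
    have h2 : w * (algebraMap R DD s * u'' (iot v0)) = w * ((2:DD)^n * algebraMap R DD b) := by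
      rw [h1]
    rw [← mul_assoc, hw, one_mul] at h2
    rw [h2, smul_eq_mul]
    ring

end Sep

section Main

local notation "R" => Polynomial ℤ
local notation "QQ" => Polynomial ℚ

lemma mem_perp_iff {σ : Polynomial ℤ ≃+* Polynomial ℤ} {τ : QtZt →+ QtZt}
    {M : Type} [AddCommGroup M] [Module R M] (L : LinkingForm σ τ M)
    (X : Submodule R M) (y : M) :
    y ∈ L.perp X ↔ ∀ x ∈ X, L.b y x = 0 := Iff.rfl

lemma b_zero_right {σ : Polynomial ℤ ≃+* Polynomial ℤ} {τ : QtZt →+ QtZt}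
    {M : Type} [AddCommGroup M] [Module R M] (L : LinkingForm σ τ M) (y : M) :
    L.b y 0 = 0 := by
  have h := L.add_right y 0 0
  rw [add_zero] at h
  exact (left_eq_add.mp h)


/-- Let `M` be a length-one `ℤ[t]`-module of exponent `2ⁿ`, `σ` an involution of
`ℤ[t]` (extending to `σQ` on `ℚ[t]` and inducing `τ` on `ℚ[t]/ℤ[t]`), and `L` a
nonsingular `σ`-sesquilinear linking form on `M`.  Then for every submodule `N` of
`M` one has `N̄ = N^⊥⊥`. -/
theorem closure_eq_perp_perp
    (M : Type) [AddCommGroup M] [Module (Polynomial ℤ) M]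
    (n : ℕ) (hM : IsLengthOne (Polynomial ℤ) M)
    (hexp : ∀ x : M, (2 : Polynomial ℤ) ^ n • x = 0)
    (σ : Polynomial ℤ ≃+* Polynomial ℤ) (hσ : ∀ p, σ (σ p) = p)
    (σQ : Polynomial ℚ ≃+* Polynomial ℚ)
    (hσQ : ∀ p : Polynomial ℤ, σQ (algebraMap (Polynomial ℤ) (Polynomial ℚ) p) =
      algebraMap (Polynomial ℤ) (Polynomial ℚ) (σ p))
    (τ : QtZt →+ QtZt)
    (hτ : ∀ x : Polynomial ℚ, τ (Submodule.Quotient.mk x) = Submodule.Quotient.mk (σQ x))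
    (L : LinkingForm σ τ M)
    (N : Submodule (Polynomial ℤ) M) :
    N.closure' = L.perp (L.perp N) := by
  classical
  have htau0 : ∀ c : QtZt, τ c = 0 → c = 0 := by
    intro c h0
    obtain ⟨qq, rfl⟩ := Submodule.Quotient.mk_surjective _ c
    rw [hτ, qtzt_mk_eq_zero] at h0
    obtain ⟨a, ha⟩ := h0
    rw [qtzt_mk_eq_zero]
    refine ⟨σ a, ?_⟩
    have h2 : σQ (algebraMap R QQ (σ a)) = algebraMap R QQ a := by rw [hσQ, hσ]
    have h3 : σQ (algebraMap R QQ (σ a)) = σQ qq := by rw [h2, ha]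
    exact σQ.injective h3
  apply le_antisymm
  · -- closure ⊆ perp perp
    rintro x ⟨p, hp, hpx⟩
    rw [mem_perp_iff]
    intro y hy
    rw [mem_perp_iff] at hy
    have hbyx : L.b y x = 0 := by
      apply qtzt_eq_zero n (p := p)
      · intro hdvd
        exact hp (Ideal.mem_span_singleton.mpr hdvd)
      · rw [← L.smul_right, hexp x, b_zero_right]
      · rw [← L.smul_right]
        exact hy _ hpx
    rw [L.symm, hbyx, map_zero]
  · -- perp perp ⊆ closure
    intro x hx
    by_contra hxc
    rw [mem_perp_iff] at hx
    obtain ⟨kk, l, f, g, hfinj, hgsurj, hrange⟩ := hM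
    -- the "division by 2^n" map h
    have hmem : ∀ w : Fin l → R, ((2:R)^n) • w ∈ LinearMap.range f := by
      intro w
      rw [hrange, LinearMap.mem_ker, map_smul, hexp]
    set e := LinearEquiv.ofInjective f hfinj with hedef
    set h : (Fin l → R) →ₗ[R] (Fin kk → R) :=
      e.symm.toLinearMap ∘ₗ
        (LinearMap.codRestrict (LinearMap.range f) (((2:R)^n) • LinearMap.id) hmem) with hhdef
    have hfh : ∀ w, f (h w) = ((2:R)^n) • w := by
      intro w
      have h1 : e (h w) = ⟨((2:R)^n) • w, hmem w⟩ := by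
        rw [hhdef]
        simp only [LinearMap.comp_apply, LinearEquiv.coe_coe]
        rw [LinearEquiv.apply_symm_apply]
        rfl
      have h2 := congrArg Subtype.val h1
      rwa [hedef, LinearEquiv.ofInjective_apply] at h2
    have hRtf : ∀ z : Fin kk → R, ((2:R)^n) • z = 0 → z = 0 := by
      intro z hz
      funext i
      have := congrFun hz i
      simp only [Pi.smul_apply, smul_eq_mul, Pi.zero_apply] at this
      exact (mul_eq_zero.mp this).resolve_left (pow_ne_zero _ two_ne_zero)
    have hRtfl : ∀ z : Fin l → R, ((2:R)^n) • z = 0 → z = 0 := by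
      intro z hz
      funext i
      have := congrFun hz i
      simp only [Pi.smul_apply, smul_eq_mul, Pi.zero_apply] at this
      exact (mul_eq_zero.mp this).resolve_left (pow_ne_zero _ two_ne_zero)
    have hhinj : ∀ z, h z = 0 → z = 0 := by
      intro z hz
      apply hRtfl
      rw [← hfh z, hz, map_zero]
    obtain ⟨xt, hxt⟩ := hgsurj x
    set NT : Submodule R (Fin l → R) := N.comap g with hNTdef
    set W : Submodule R (Fin kk → R) := NT.map h with hWdef
    have hfNT : ∀ z : Fin kk → R, f z ∈ NT := by
      intro z
      have : f z ∈ LinearMap.ker g := by rw [← hrange]; exact LinearMap.mem_range_self f z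
      rw [LinearMap.mem_ker] at this
      rw [hNTdef, Submodule.mem_comap, this]
      exact N.zero_mem
    have hhf : ∀ z : Fin kk → R, h (f z) = ((2:R)^n) • z := by
      intro z
      apply hfinj
      rw [hfh, map_smul]
    have hW2 : ∀ z : Fin kk → R, ((2:R)^n) • z ∈ W := by
      intro z
      rw [hWdef]
      exact ⟨f z, hfNT z, hhf z⟩
    have hv : ∀ s ∈ SS, s • (h xt) ∉ W := by
      intro s hs hmem'
      obtain ⟨ν, hν, hνeq⟩ := hmem'
      have : h (s • xt) = h ν := by rw [map_smul, hνeq]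
      have hsx : s • xt = ν := by
        have h0 : h (s • xt - ν) = 0 := by rw [map_sub, this, sub_self]
        have := hhinj _ h0
        rwa [sub_eq_zero] at this
      apply hxc
      refine ⟨s, hs, ?_⟩
      have : g (s • xt) ∈ N := by
        rw [hsx]
        exact hν
      rwa [map_smul, hxt] at this
    obtain ⟨u, huW, huv⟩ := separation W hW2 (h xt) hv
    -- the functional ψ on Fin l → R
    set cst : QQ := Polynomial.C (((2:ℚ)^n)⁻¹) with hcstdef
    have halg2 : algebraMap R QQ ((2:R)^n) = (2:QQ)^n := by
      rw [map_pow, map_ofNat]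
    have hcst : cst * algebraMap R QQ ((2:R)^n) = 1 := by
      rw [halg2, hcstdef]
      have h2 : ((2:QQ))^n = Polynomial.C ((2:ℚ)^n) := by
        rw [map_pow, show ((2:QQ)) = Polynomial.C (2:ℚ) from (map_ofNat Polynomial.C 2).symm]
      rw [h2, ← Polynomial.C_mul, inv_mul_cancel₀ (by positivity : ((2:ℚ)^n) ≠ 0), Polynomial.C_1]
    set ψ : (Fin l → R) →ₗ[R] QtZt :=
      { toFun := fun w => Submodule.Quotient.mk (cst * algebraMap R QQ (u (h w)))
        map_add' := by
          intro a b'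
          rw [map_add, map_add, map_add, mul_add, Submodule.Quotient.mk_add]
        map_smul' := by
          intro p w
          dsimp only [RingHom.id_apply]
          rw [map_smul, map_smul, smul_eq_mul, map_mul, qtzt_smul_mk]
          congr 1
          ring } with hψdef
    have hψapp : ∀ w, ψ w = Submodule.Quotient.mk (cst * algebraMap R QQ (u (h w))) :=
      fun w => rfl
    have hψdvd : ∀ w : Fin l → R, ((2:R)^n ∣ u (h w)) → ψ w = 0 := by
      rintro w ⟨a, ha⟩
      rw [hψapp, ha, qtzt_mk_eq_zero]
      refine ⟨a, ?_⟩
      rw [map_mul, ← mul_assoc, hcst, one_mul]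
    have hψker : ∀ z ∈ LinearMap.ker g, ψ z = 0 := by
      intro z hz
      rw [← hrange] at hz
      obtain ⟨z', rfl⟩ := hz
      apply hψdvd
      rw [hhf, map_smul, smul_eq_mul]
      exact ⟨u z', rfl⟩
    have hψker' : LinearMap.ker g ≤ LinearMap.ker ψ :=
      fun z hz => LinearMap.mem_ker.mpr (hψker z hz)
    set φ : M →ₗ[R] QtZt :=
      ((LinearMap.ker g).liftQ ψ hψker') ∘ₗ
        (g.quotKerEquivOfSurjective hgsurj).symm.toLinearMap with hφdef
    have hφg : ∀ w, φ (g w) = ψ w := by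
      intro w
      have h1 : (g.quotKerEquivOfSurjective hgsurj) (Submodule.Quotient.mk w) = g w := rfl
      have h2 : (g.quotKerEquivOfSurjective hgsurj).symm (g w) = Submodule.Quotient.mk w := by
        rw [LinearEquiv.symm_apply_eq, h1]
      rw [hφdef]
      simp only [LinearMap.comp_apply, LinearEquiv.coe_coe]
      rw [h2]
      exact Submodule.liftQ_apply _ _ _
    obtain ⟨y, hy⟩ := L.adj_surj φ
    have hyperp : y ∈ L.perp N := by
      rw [mem_perp_iff]
      intro z hz
      obtain ⟨w, rfl⟩ := hgsurj z
      rw [hy, hφg]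
      apply hψdvd
      apply huW
      rw [hWdef]
      apply Submodule.mem_map_of_mem
      rw [hNTdef, Submodule.mem_comap]
      exact hz
    have hb0 : L.b x y = 0 := hx y hyperp
    rw [L.symm] at hb0
    have hbyx := htau0 _ hb0
    rw [hy, ← hxt, hφg] at hbyx
    rw [hψapp, qtzt_mk_eq_zero] at hbyx
    obtain ⟨a, ha⟩ := hbyx
    apply huv
    refine ⟨a, ?_⟩
    have h3 : algebraMap R QQ ((2:R)^n * a) = algebraMap R QQ (u (h xt)) := by
      rw [map_mul, ha, ← mul_assoc, mul_comm (algebraMap R QQ ((2:R)^n)) cst, hcst, one_mul]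
    exact (algQ_injective h3).symm
end Main
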